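/- arXiv:2208.04533 — 5 statements merged into one kernel-verified Lean document; each statement's English description precedes it below -/
import Mathlib

section
/- Let A be an I-modal ririg and θ a congruence on A. Then the equivalence class F_θ = {x ∈ A : (x,1) ∈ θ} of 1 is an I-filter of A. -/
/-- An integral residuated rig (ririg). -/
class Ririg (A : Type*) extends CommMonoid A, SemilatticeSup A, OrderBot A, OrderTop A, HImp A where
  one_eq_top : (1 : A) = ⊤
  mul_sup : ∀ x y z : A, x * (y ⊔ z) = x * y ⊔ x * z
  mul_bot : ∀ x : A, x * ⊥ = ⊥
  residuation : ∀ a b c : A, a * b ≤ c ↔ a ≤ b ⇨ c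

/-- A modal operator on a ririg. -/
def IsModal {A : Type*} [Ririg A] (m : A → A) : Prop :=
  m 1 = 1 ∧ ∀ x y : A, m (x ⇨ y) ≤ m x ⇨ m y

/-- Interpretation of an I-block (finite composition of modal operators). -/
def blockApp {A ι : Type*} (f : ι → A → A) : List ι → A → A
  | [] => id
  | i :: L => f i ∘ blockApp f L

/-- I-filter. -/
def IsIFilter {A ι : Type*} [Ririg A] (f : ι → A → A) (F : Set A) : Prop :=
  F.Nonempty ∧ (∀ x y : A, x ∈ F → x ≤ y → y ∈ F) ∧
    (∀ x y : A, x ∈ F → y ∈ F → x * y ∈ F) ∧ (∀ i : ι, ∀ x : A, x ∈ F → f i x ∈ F)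

/-- Congruence of an I-modal ririg. -/
def IsRirigCon {A ι : Type*} [Ririg A] (f : ι → A → A) (θ : A → A → Prop) : Prop :=
  Equivalence θ ∧
    (∀ a b c d : A, θ a b → θ c d → θ (a ⊔ c) (b ⊔ d)) ∧
    (∀ a b c d : A, θ a b → θ c d → θ (a * c) (b * d)) ∧
    (∀ a b c d : A, θ a b → θ c d → θ (a ⇨ c) (b ⇨ d)) ∧
    (∀ i : ι, ∀ a b : A, θ a b → θ (f i a) (f i b))

theorem stmt7 {A ι : Type*} [Ririg A] (f : ι → A → A) (hf : ∀ i, IsModal (f i))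
    (θ : A → A → Prop) (hθ : IsRirigCon f θ) :
    IsIFilter f {x : A | θ x 1} := by
  obtain ⟨heq, hsup, hmul, himp, hmod⟩ := hθ
  refine ⟨⟨1, heq.refl 1⟩, ?_, ?_, ?_⟩
  · intro x y hx hxy
    have h1 : θ (y ⊔ x) (y ⊔ 1) := hsup _ _ _ _ (heq.refl y) hx
    have hyx : y ⊔ x = y := sup_eq_left.mpr hxy
    have hy1 : y ⊔ 1 = 1 := by
      rw [Ririg.one_eq_top]; exact sup_eq_right.mpr le_top
    rwa [hyx, hy1] at h1
  · intro x y hx hy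
    have := hmul _ _ _ _ hx hy
    rwa [one_mul] at this
  · intro i x hx
    have := hmod i _ _ hx
    rwa [(hf i).1] at this
end

section
/- Let A be an I-modal ririg and F an I-filter. Define x ∗ y = (x → y)·(y → x). Then the relation θ_F = {(x,y) ∈ A² : x ∗ y ∈ F} is a congruence on A (i.e., an equivalence relation compatible with ∨, ·, →, and each modal operator m ∈ I). -/
namespace RirigAux

variable {A : Type*} [Ririg A]

lemma mul_le_mul_left' (a : A) {b c : A} (h : b ≤ c) : a * b ≤ a * c := by
  have : a * c = a * b ⊔ a * c := by rw [← Ririg.mul_sup, sup_eq_right.mpr h]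
  rw [this]; exact le_sup_left

lemma mul_le_left (a b : A) : a * b ≤ a := by
  have := mul_le_mul_left' a (le_top : b ≤ ⊤)
  rwa [← Ririg.one_eq_top, mul_one] at this

lemma mul_le_right (a b : A) : a * b ≤ b := by
  rw [mul_comm]; exact mul_le_left b a

lemma himp_mul_le (a b : A) : (a ⇨ b) * a ≤ b :=
  (Ririg.residuation _ _ _).mpr le_rfl

lemma le_himp_of_le {a b : A} (h : a ≤ b) : (1 : A) ≤ a ⇨ b := by
  refine (Ririg.residuation _ _ _).mp ?_
  rwa [one_mul]

lemma himp_trans (a b c : A) : (a ⇨ b) * (b ⇨ c) ≤ a ⇨ c := by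
  refine (Ririg.residuation _ _ _).mp ?_
  calc (a ⇨ b) * (b ⇨ c) * a = (b ⇨ c) * ((a ⇨ b) * a) := by ac_rfl
    _ ≤ (b ⇨ c) * b := mul_le_mul_left' _ (himp_mul_le a b)
    _ ≤ c := himp_mul_le b c

lemma one_mem {ι : Type*} {f : ι → A → A} {F : Set A} (hF : IsIFilter f F) :
    (1 : A) ∈ F := by
  obtain ⟨⟨x, hx⟩, hup, -, -⟩ := hF
  refine hup x 1 hx ?_
  rw [Ririg.one_eq_top]
  exact le_top

lemma himp_mem_of_le {ι : Type*} {f : ι → A → A} {F : Set A} (hF : IsIFilter f F)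
    {a b : A} (h : a ≤ b) : a ⇨ b ∈ F :=
  hF.2.1 1 _ (one_mem hF) (le_himp_of_le h)

lemma mul_le_mul'' {a b c d : A} (h1 : a ≤ b) (h2 : c ≤ d) : a * c ≤ b * d :=
  le_trans (mul_le_mul_left' a h2)
    (by rw [mul_comm a d, mul_comm b d]; exact mul_le_mul_left' d h1)

end RirigAux

open RirigAux in
theorem stmt8 {A ι : Type*} [Ririg A] (f : ι → A → A) (hf : ∀ i, IsModal (f i))
    (F : Set A) (hF : IsIFilter f F) :
    IsRirigCon f (fun x y : A => (x ⇨ y) * (y ⇨ x) ∈ F) := by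
  obtain ⟨hne, hup, hmul, hmod⟩ := hF
  have hF' : IsIFilter f F := ⟨hne, hup, hmul, hmod⟩
  have mem1 : ∀ {x y : A}, (x ⇨ y) * (y ⇨ x) ∈ F → x ⇨ y ∈ F :=
    fun h => hup _ _ h (mul_le_left _ _)
  have mem2 : ∀ {x y : A}, (x ⇨ y) * (y ⇨ x) ∈ F → y ⇨ x ∈ F :=
    fun h => hup _ _ h (mul_le_right _ _)
  have pair : ∀ {x y : A}, x ⇨ y ∈ F → y ⇨ x ∈ F → (x ⇨ y) * (y ⇨ x) ∈ F :=
    fun h1 h2 => hmul _ _ h1 h2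
  refine ⟨⟨fun x => pair (himp_mem_of_le hF' (le_refl x)) (himp_mem_of_le hF' (le_refl x)),
      fun {x y} h => pair (mem2 h) (mem1 h),
      fun {x y z} h1 h2 => pair
        (hup _ _ (hmul _ _ (mem1 h1) (mem1 h2)) (himp_trans x y z))
        (hup _ _ (hmul _ _ (mem2 h2) (mem2 h1)) (himp_trans z y x))⟩,
    ?_, ?_, ?_, ?_⟩
  · -- sup
    intro a b c d hab hcd
    have key : ∀ x y z w : A, (x ⇨ y) * (z ⇨ w) ≤ (x ⊔ z) ⇨ (y ⊔ w) := by
      intro x y z w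
      refine (Ririg.residuation _ _ _).mp ?_
      rw [Ririg.mul_sup]
      refine sup_le ?_ ?_
      · calc (x ⇨ y) * (z ⇨ w) * x = (z ⇨ w) * ((x ⇨ y) * x) := by ac_rfl
          _ ≤ (z ⇨ w) * y := mul_le_mul_left' _ (himp_mul_le x y)
          _ ≤ y := mul_le_right _ _
          _ ≤ y ⊔ w := le_sup_left
      · calc (x ⇨ y) * (z ⇨ w) * z = (x ⇨ y) * ((z ⇨ w) * z) := by ac_rfl
          _ ≤ (x ⇨ y) * w := mul_le_mul_left' _ (himp_mul_le z w)
          _ ≤ w := mul_le_right _ _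
          _ ≤ y ⊔ w := le_sup_right
    exact pair
      (hup _ _ (hmul _ _ (mem1 hab) (mem1 hcd)) (key a b c d))
      (hup _ _ (hmul _ _ (mem2 hab) (mem2 hcd)) (key b a d c))
  · -- mul
    intro a b c d hab hcd
    have key : ∀ x y z w : A, (x ⇨ y) * (z ⇨ w) ≤ (x * z) ⇨ (y * w) := by
      intro x y z w
      refine (Ririg.residuation _ _ _).mp ?_
      calc (x ⇨ y) * (z ⇨ w) * (x * z) = ((x ⇨ y) * x) * ((z ⇨ w) * z) := by ac_rfl
        _ ≤ y * w := mul_le_mul'' (himp_mul_le x y) (himp_mul_le z w)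
    exact pair
      (hup _ _ (hmul _ _ (mem1 hab) (mem1 hcd)) (key a b c d))
      (hup _ _ (hmul _ _ (mem2 hab) (mem2 hcd)) (key b a d c))
  · -- himp
    intro a b c d hab hcd
    have key : ∀ x y z w : A, (y ⇨ x) * (z ⇨ w) ≤ (x ⇨ z) ⇨ (y ⇨ w) := by
      intro x y z w
      refine (Ririg.residuation _ _ _).mp ?_
      refine (Ririg.residuation _ _ _).mp ?_
      calc (y ⇨ x) * (z ⇨ w) * (x ⇨ z) * y
          = (z ⇨ w) * ((x ⇨ z) * ((y ⇨ x) * y)) := by ac_rfl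
        _ ≤ (z ⇨ w) * ((x ⇨ z) * x) :=
            mul_le_mul_left' _ (mul_le_mul_left' _ (himp_mul_le y x))
        _ ≤ (z ⇨ w) * z := mul_le_mul_left' _ (himp_mul_le x z)
        _ ≤ w := himp_mul_le z w
    exact pair
      (hup _ _ (hmul _ _ (mem2 hab) (mem1 hcd)) (key a b c d))
      (hup _ _ (hmul _ _ (mem1 hab) (mem2 hcd)) (key b a d c))
  · -- modal
    intro i a b hab
    exact pair
      (hup _ _ (hmod i _ (mem1 hab)) ((hf i).2 a b))
      (hup _ _ (hmod i _ (mem2 hab)) ((hf i).2 b a))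
end

section
/- Let A be an I-modal ririg. The maps F ↦ θ_F = {(x,y) : (x→y)·(y→x) ∈ F} and θ ↦ F_θ = {x : (x,1) ∈ θ} are mutually inverse order isomorphisms between the lattice of I-filters of A (ordered by inclusion) and the congruence lattice of A. -/
section Aux
variable {A : Type*} [Ririg A]

lemma rle_one (x : A) : x ≤ 1 := Ririg.one_eq_top (A := A) ▸ le_top

lemma rmul_le_mul_left {a b : A} (c : A) (h : a ≤ b) : c * a ≤ c * b := by
  have : c * b = c * a ⊔ c * b := by
    rw [← Ririg.mul_sup, sup_eq_right.mpr h]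
  rw [this]; exact le_sup_left

lemma rmul_le_mul {a b c d : A} (h1 : a ≤ b) (h2 : c ≤ d) : a * c ≤ b * d :=
  le_trans (rmul_le_mul_left c h1 |>.trans_eq (mul_comm c b) |>.trans_eq' (mul_comm c a))
    (rmul_le_mul_left b h2)

lemma rmul_le_left (a b : A) : a * b ≤ a := by
  simpa using rmul_le_mul_left a (rle_one b)

lemma rmul_le_right (a b : A) : a * b ≤ b := by
  rw [mul_comm]; exact rmul_le_left b a

lemma rhimp_mul_le (x y : A) : (x ⇨ y) * x ≤ y := (Ririg.residuation _ _ _).mpr le_rfl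

lemma rhimp_eq_one {x y : A} (h : x ≤ y) : x ⇨ y = 1 :=
  le_antisymm (rle_one _) ((Ririg.residuation 1 x y).mp (by simpa using h))

lemma rhimp_self (x : A) : x ⇨ x = 1 := rhimp_eq_one le_rfl

lemma rone_himp (x : A) : (1 : A) ⇨ x = x :=
  le_antisymm (by simpa using rhimp_mul_le 1 x)
    ((Ririg.residuation x 1 x).mp (by simp))

lemma rhimp_one (x : A) : x ⇨ (1 : A) = 1 := rhimp_eq_one (rle_one x)

lemma rhimp_trans (x y z : A) : (x ⇨ y) * (y ⇨ z) ≤ x ⇨ z := by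
  rw [← Ririg.residuation]
  calc (x ⇨ y) * (y ⇨ z) * x = (y ⇨ z) * ((x ⇨ y) * x) := by rw [mul_comm (x ⇨ y) (y ⇨ z), mul_assoc]
    _ ≤ (y ⇨ z) * y := rmul_le_mul_left _ (rhimp_mul_le x y)
    _ ≤ z := rhimp_mul_le y z
end Aux

section Aux2
variable {A : Type*} [Ririg A]

lemma rsup_compat (a b c d : A) : (a ⇨ b) * (c ⇨ d) ≤ (a ⊔ c) ⇨ (b ⊔ d) := by
  rw [← Ririg.residuation, Ririg.mul_sup]
  apply sup_le
  · calc (a ⇨ b) * (c ⇨ d) * a ≤ (a ⇨ b) * 1 * a :=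
        rmul_le_mul (rmul_le_mul le_rfl (rle_one _)) le_rfl
      _ = (a ⇨ b) * a := by rw [mul_one]
      _ ≤ b := rhimp_mul_le a b
      _ ≤ b ⊔ d := le_sup_left
  · calc (a ⇨ b) * (c ⇨ d) * c ≤ 1 * (c ⇨ d) * c :=
        rmul_le_mul (rmul_le_mul (rle_one _) le_rfl) le_rfl
      _ = (c ⇨ d) * c := by rw [one_mul]
      _ ≤ d := rhimp_mul_le c d
      _ ≤ b ⊔ d := le_sup_right

lemma rmul_compat (a b c d : A) : (a ⇨ b) * (c ⇨ d) ≤ (a * c) ⇨ (b * d) := by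
  rw [← Ririg.residuation]
  calc (a ⇨ b) * (c ⇨ d) * (a * c) = ((a ⇨ b) * a) * ((c ⇨ d) * c) := by
        rw [mul_mul_mul_comm]
    _ ≤ b * d := rmul_le_mul (rhimp_mul_le a b) (rhimp_mul_le c d)

lemma rhimp_compat (a b c d : A) : (b ⇨ a) * (c ⇨ d) ≤ (a ⇨ c) ⇨ (b ⇨ d) := by
  rw [← Ririg.residuation, ← Ririg.residuation]
  calc (b ⇨ a) * (c ⇨ d) * (a ⇨ c) * b
      = (c ⇨ d) * ((a ⇨ c) * ((b ⇨ a) * b)) := by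
        simp only [mul_assoc, mul_comm, mul_left_comm]
    _ ≤ (c ⇨ d) * ((a ⇨ c) * a) :=
        rmul_le_mul_left _ (rmul_le_mul_left _ (rhimp_mul_le b a))
    _ ≤ (c ⇨ d) * c := rmul_le_mul_left _ (rhimp_mul_le a c)
    _ ≤ d := rhimp_mul_le c d

lemma rmodal_mono {m : A → A} (hm : IsModal m) {x y : A} (h : x ≤ y) : m x ≤ m y := by
  have h1 : m (x ⇨ y) = 1 := by rw [rhimp_eq_one h, hm.1]
  have := hm.2 x y
  rw [h1] at this
  have := (Ririg.residuation 1 (m x) (m y)).mpr this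
  simpa using this

end Aux2

theorem stmt9 {A ι : Type*} [Ririg A] (f : ι → A → A) (hf : ∀ i, IsModal (f i)) :
    (∀ F : Set A, IsIFilter f F →
      IsRirigCon f (fun x y : A => (x ⇨ y) * (y ⇨ x) ∈ F) ∧
      {x : A | (fun x y : A => (x ⇨ y) * (y ⇨ x) ∈ F) x 1} = F) ∧
    (∀ θ : A → A → Prop, IsRirigCon f θ →
      IsIFilter f {x : A | θ x 1} ∧
      (fun x y : A => (x ⇨ y) * (y ⇨ x) ∈ {x : A | θ x 1}) = θ) ∧
    (∀ F G : Set A, IsIFilter f F → IsIFilter f G →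
      (F ⊆ G ↔ ∀ x y : A, (x ⇨ y) * (y ⇨ x) ∈ F → (x ⇨ y) * (y ⇨ x) ∈ G)) := by
  have eone : ∀ x : A, (x ⇨ 1) * (1 ⇨ x) = x := by
    intro x; rw [rhimp_one, rone_himp, one_mul]
  refine ⟨?_, ?_, ?_⟩
  · intro F hF
    obtain ⟨hne, hup, hmulF, hmodF⟩ := hF
    have hone : (1 : A) ∈ F := by
      obtain ⟨z, hz⟩ := hne
      exact hup z 1 hz (rle_one z)
    have hkey : ∀ x y : A, ((x ⇨ y) * (y ⇨ x) : A) ≤ ⊤ → True := fun _ _ _ => trivial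
    constructor
    · refine ⟨⟨?_, ?_, ?_⟩, ?_, ?_, ?_, ?_⟩
      · intro x
        show (x ⇨ x) * (x ⇨ x) ∈ F
        rw [rhimp_self, one_mul]
        exact hone
      · intro x y h
        simpa [mul_comm] using h
      · intro x y z hxy hyz
        refine hup _ _ (hmulF _ _ hxy hyz) ?_
        calc (x ⇨ y) * (y ⇨ x) * ((y ⇨ z) * (z ⇨ y))
            = ((x ⇨ y) * (y ⇨ z)) * ((y ⇨ x) * (z ⇨ y)) := by rw [mul_mul_mul_comm]
          _ = ((x ⇨ y) * (y ⇨ z)) * ((z ⇨ y) * (y ⇨ x)) := by rw [mul_comm (y ⇨ x)]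
          _ ≤ (x ⇨ z) * (z ⇨ x) := rmul_le_mul (rhimp_trans _ _ _) (rhimp_trans _ _ _)
      · intro a b c d hab hcd
        refine hup _ _ (hmulF _ _ hab hcd) ?_
        calc (a ⇨ b) * (b ⇨ a) * ((c ⇨ d) * (d ⇨ c))
            = ((a ⇨ b) * (c ⇨ d)) * ((b ⇨ a) * (d ⇨ c)) := by rw [mul_mul_mul_comm]
          _ ≤ ((a ⊔ c) ⇨ (b ⊔ d)) * ((b ⊔ d) ⇨ (a ⊔ c)) :=
            rmul_le_mul (rsup_compat a b c d) (rsup_compat b a d c)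
      · intro a b c d hab hcd
        refine hup _ _ (hmulF _ _ hab hcd) ?_
        calc (a ⇨ b) * (b ⇨ a) * ((c ⇨ d) * (d ⇨ c))
            = ((a ⇨ b) * (c ⇨ d)) * ((b ⇨ a) * (d ⇨ c)) := by rw [mul_mul_mul_comm]
          _ ≤ ((a * c) ⇨ (b * d)) * ((b * d) ⇨ (a * c)) :=
            rmul_le_mul (rmul_compat a b c d) (rmul_compat b a d c)
      · intro a b c d hab hcd
        refine hup _ _ (hmulF _ _ hab hcd) ?_
        calc (a ⇨ b) * (b ⇨ a) * ((c ⇨ d) * (d ⇨ c))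
            = ((b ⇨ a) * (c ⇨ d)) * ((a ⇨ b) * (d ⇨ c)) := by
              rw [mul_comm (a ⇨ b) (b ⇨ a), mul_mul_mul_comm]
          _ ≤ ((a ⇨ c) ⇨ (b ⇨ d)) * ((b ⇨ d) ⇨ (a ⇨ c)) :=
            rmul_le_mul (rhimp_compat a b c d) (rhimp_compat b a d c)
      · intro i a b h
        have h1 : f i ((a ⇨ b) * (b ⇨ a)) ∈ F := hmodF i _ h
        refine hup _ _ (hmulF _ _ h1 h1) ?_
        have e1 : f i ((a ⇨ b) * (b ⇨ a)) ≤ f i a ⇨ f i b :=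
          le_trans (rmodal_mono (hf i) (rmul_le_left _ _)) ((hf i).2 a b)
        have e2 : f i ((a ⇨ b) * (b ⇨ a)) ≤ f i b ⇨ f i a :=
          le_trans (rmodal_mono (hf i) (rmul_le_right _ _)) ((hf i).2 b a)
        exact rmul_le_mul e1 e2
    · ext x
      simp only [Set.mem_setOf_eq, eone x]
  · intro θ hθ
    obtain ⟨heq, hsup, hmul, himp, hmod⟩ := hθ
    constructor
    · refine ⟨⟨1, heq.refl 1⟩, ?_, ?_, ?_⟩
      · intro x y hx hxy
        have h1 : θ (y ⊔ x) (y ⊔ 1) := hsup y y x 1 (heq.refl y) hx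
        rwa [sup_eq_left.mpr hxy, sup_eq_right.mpr (rle_one y)] at h1
      · intro x y hx hy
        have := hmul x 1 y 1 hx hy
        rwa [one_mul] at this
      · intro i x hx
        have := hmod i x 1 hx
        rwa [(hf i).1] at this
    · funext x y
      simp only [Set.mem_setOf_eq]
      apply propext
      constructor
      · intro h
        set e := (x ⇨ y) * (y ⇨ x) with he
        have hex : e * x ≤ y :=
          le_trans (rmul_le_mul (rmul_le_left _ _) le_rfl) (rhimp_mul_le x y)
        have hey : e * y ≤ x :=
          le_trans (rmul_le_mul (rmul_le_right _ _) le_rfl) (rhimp_mul_le y x)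
        have h1 : θ (e * x) x := by
          have := hmul e 1 x x h (heq.refl x); rwa [one_mul] at this
        have h2 : θ (e * y) y := by
          have := hmul e 1 y y h (heq.refl y); rwa [one_mul] at this
        have h3 : θ (e * x ⊔ y) (x ⊔ y) := hsup _ _ _ _ h1 (heq.refl y)
        rw [sup_eq_right.mpr hex] at h3
        have h4 : θ (e * y ⊔ x) (y ⊔ x) := hsup _ _ _ _ h2 (heq.refl x)
        rw [sup_eq_right.mpr hey, sup_comm] at h4
        exact heq.trans h4 (heq.symm h3)
      · intro h
        have h1 : θ (x ⇨ y) (y ⇨ y) := himp x y y y h (heq.refl y)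
        have h2 : θ (y ⇨ x) (y ⇨ y) := himp y y x y (heq.refl y) h
        rw [rhimp_self] at h1 h2
        have := hmul _ _ _ _ h1 h2
        rwa [one_mul] at this
  · intro F G hF hG
    constructor
    · intro h x y hxy
      exact h hxy
    · intro h x hx
      have h1 : (x ⇨ 1) * (1 ⇨ x) ∈ F := by rw [eone x]; exact hx
      have h2 := h x 1 h1
      rwa [eone x] at h2
end

section
/- Let A be an I-modal ririg with I finite and F ⊆ A. Then F is an I-filter if and only if F is a nonempty up-set closed under multiplication and closed under the single operation λ(x) = x · ∏_{m∈I} m(x). -/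
theorem stmt12 {A ι : Type*} [Ririg A] [Fintype ι] (f : ι → A → A)
    (hf : ∀ i, IsModal (f i)) (F : Set A) :
    IsIFilter f F ↔
      (F.Nonempty ∧ (∀ x y : A, x ∈ F → x ≤ y → y ∈ F) ∧
        (∀ x y : A, x ∈ F → y ∈ F → x * y ∈ F) ∧
        (∀ x : A, x ∈ F → x * ∏ i : ι, f i x ∈ F)) := by
  have mono : ∀ x y z : A, y ≤ z → x * y ≤ x * z := by
    intro x y z h
    have : x * z = x * y ⊔ x * z := by
      rw [← Ririg.mul_sup, sup_eq_right.mpr h]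
    rw [this]; exact le_sup_left
  have mul_le_right : ∀ a b : A, a * b ≤ b := by
    intro a b
    have h1 : a ≤ 1 := by rw [Ririg.one_eq_top]; exact le_top
    calc a * b = b * a := mul_comm a b
      _ ≤ b * 1 := mono b a 1 h1
      _ = b := mul_one b
  constructor
  · rintro ⟨hne, hup, hmul, hmod⟩
    refine ⟨hne, hup, hmul, fun x hx => ?_⟩
    have h1 : (1 : A) ∈ F := by
      obtain ⟨a, ha⟩ := hne
      exact hup a 1 ha (by rw [Ririg.one_eq_top]; exact le_top)
    have hprod : (∏ i : ι, f i x) ∈ F :=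
      Finset.prod_induction _ (· ∈ F) (fun a b ha hb => hmul a b ha hb) h1
        (fun i _ => hmod i x hx)
    exact hmul x _ hx hprod
  · rintro ⟨hne, hup, hmul, hlam⟩
    classical
    refine ⟨hne, hup, hmul, fun i x hx => ?_⟩
    have hle : x * ∏ j : ι, f j x ≤ f i x := by
      calc x * ∏ j : ι, f j x ≤ ∏ j : ι, f j x := mul_le_right _ _
        _ = f i x * ∏ j ∈ Finset.univ.erase i, f j x :=
            (Finset.mul_prod_erase Finset.univ _ (Finset.mem_univ i)).symm
        _ = (∏ j ∈ Finset.univ.erase i, f j x) * f i x := mul_comm _ _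
        _ ≤ f i x := mul_le_right _ _
    exact hup _ _ (hlam x hx) hle
end

section
/- Let A be an I-modal ririg in which every modal operator m is contractive (m(x) ≤ x) and satisfies m(a ∨ b) ≤ m(a) ∨ m(b). Then for any two I-blocks M, N (finite compositions of modal operators) there exists an I-block Q such that Q(a ∨ b) ≤ M(a) ∨ N(b) for all a, b ∈ A. -/
lemma ririg_mono {A : Type*} [Ririg A] {m : A → A} (hm : IsModal m) :
    Monotone m := by
  intro x y hxy
  have htop : x ⇨ y = ⊤ := by
    refine le_antisymm le_top ?_
    rw [← Ririg.residuation]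
    calc ⊤ * x = 1 * x := by rw [Ririg.one_eq_top]
      _ = x := one_mul x
      _ ≤ y := hxy
  have h1 : m (x ⇨ y) = 1 := by rw [htop, ← Ririg.one_eq_top, hm.1]
  have h2 : (1 : A) ≤ m x ⇨ m y := h1 ▸ hm.2 x y
  have := (Ririg.residuation 1 (m x) (m y)).mpr h2
  simpa using this

theorem stmt15 {A ι : Type*} [Ririg A] (f : ι → A → A) (hf : ∀ i, IsModal (f i))
    (hcon : ∀ (i : ι) (x : A), f i x ≤ x)
    (hsup : ∀ (i : ι) (a b : A), f i (a ⊔ b) ≤ f i a ⊔ f i b) :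
    ∀ M N : List ι, ∃ Q : List ι, ∀ a b : A,
      blockApp f Q (a ⊔ b) ≤ blockApp f M a ⊔ blockApp f N b := by
  intro M N
  refine ⟨M ++ N, fun a b => ?_⟩
  induction M with
  | nil =>
    simp only [List.nil_append, blockApp, id]
    induction N with
    | nil => simp [blockApp]
    | cons i L ih =>
      simp only [blockApp, Function.comp_apply]
      calc f i (blockApp f L (a ⊔ b)) ≤ f i (a ⊔ blockApp f L b) :=
            ririg_mono (hf i) ih
        _ ≤ f i a ⊔ f i (blockApp f L b) := hsup i _ _
        _ ≤ a ⊔ f i (blockApp f L b) := sup_le_sup_right (hcon i a) _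
  | cons i L ih =>
    simp only [List.cons_append, blockApp, Function.comp_apply]
    calc f i (blockApp f (L ++ N) (a ⊔ b))
        ≤ f i (blockApp f L a ⊔ blockApp f N b) := ririg_mono (hf i) ih
      _ ≤ f i (blockApp f L a) ⊔ f i (blockApp f N b) := hsup i _ _
      _ ≤ f i (blockApp f L a) ⊔ blockApp f N b := sup_le_sup_left (hcon i _) _
end
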